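/- Let V ∈ H₊^{−m}. The sesquilinear form t₊[u,v] = ⟨D₊^{2m}u, v⟩₊ + ⟨V·u, v⟩₊ with domain H₊^m is densely defined, closed, and sectorial on L²(0,1). -/

import Mathlib

/- STATEMENT 6: For V ∈ H₊^{−m}, the sesquilinear form
t₊[u,v] = ⟨D₊^{2m}u,v⟩₊ + ⟨V·u,v⟩₊ with domain H₊^m is densely
defined, closed and sectorial on L²(0,1).  Model: L²(0,1) ≅ ℓ²(ℤ)
(Fourier coefficients û(2k)); the form domain H₊^m is the set of
u ∈ ℓ² with Σ ⟨2k⟩^{2m}|û(2k)|² < ∞; the form is written in Fourier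
coordinates, with ⟨D₊^{2m}u,v⟩₊ = Σ (2kπ)^{2m}û(2k)conj(v̂(2k)) and
⟨V·u,v⟩₊ = Σ (V̂*û)(k)conj(v̂(2k)). -/

noncomputable section
open Complex Filter

abbrev E := lp (fun _ : ℤ => ℂ) 2

def wtp (s : ℝ) (k : ℤ) : ℝ := ((1 + |(2 * k : ℤ)| : ℝ)) ^ (2 * s)

def conv (a b : ℤ → ℂ) (k : ℤ) : ℂ := ∑' j : ℤ, a (k - j) * b j

def cplus (m : ℕ) (k : ℤ) : ℝ := (2 * Real.pi * (k : ℝ)) ^ (2 * m)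

/-- The form domain `H₊^m ⊂ L²(0,1)`. -/
def domt (m : ℕ) : Set E := {u | Summable fun k : ℤ => wtp (m : ℝ) k * ‖u k‖ ^ 2}

/-- The sesquilinear form `t₊[u,v] = ⟨D₊^{2m}u,v⟩₊ + ⟨V·u,v⟩₊`. -/
def tform (m : ℕ) (V : ℤ → ℂ) (u v : E) : ℂ :=
  (∑' k : ℤ, ((cplus m k : ℝ) : ℂ) * u k * (starRingEnd ℂ) (v k)) +
    ∑' k : ℤ, conv V (fun j => u j) k * (starRingEnd ℂ) (v k)


-- Cauchy–Schwarz for tsums over an arbitrary index type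
lemma cs_summable {ι : Type*} {f g : ι → ℝ} (hf0 : ∀ k, 0 ≤ f k) (hg0 : ∀ k, 0 ≤ g k)
    (hf : Summable fun k => f k ^ 2) (hg : Summable fun k => g k ^ 2) :
    Summable (fun k => f k * g k) := by
  refine Summable.of_nonneg_of_le (fun k => mul_nonneg (hf0 k) (hg0 k)) (fun k => ?_)
    ((hf.add hg).mul_left (1/2 : ℝ))
  nlinarith [sq_nonneg (f k - g k)]

lemma cs_tsum {ι : Type*} {f g : ι → ℝ} (hf0 : ∀ k, 0 ≤ f k) (hg0 : ∀ k, 0 ≤ g k)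
    (hf : Summable fun k => f k ^ 2) (hg : Summable fun k => g k ^ 2) :
    ∑' k, f k * g k ≤ Real.sqrt (∑' k, f k ^ 2) * Real.sqrt (∑' k, g k ^ 2) := by
  refine Summable.tsum_le_of_sum_le (cs_summable hf0 hg0 hf hg) fun s => ?_
  have h1 : (∑ k ∈ s, f k * g k) ^ 2 ≤ (∑ k ∈ s, f k ^ 2) * ∑ k ∈ s, g k ^ 2 :=
    Finset.sum_mul_sq_le_sq_mul_sq s f g
  have h2 : (∑ k ∈ s, f k ^ 2) ≤ ∑' k, f k ^ 2 := Summable.sum_le_tsum s (fun k _ => sq_nonneg _) hf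
  have h3 : (∑ k ∈ s, g k ^ 2) ≤ ∑' k, g k ^ 2 := Summable.sum_le_tsum s (fun k _ => sq_nonneg _) hg
  have h4 : 0 ≤ ∑ k ∈ s, f k * g k :=
    Finset.sum_nonneg fun k _ => mul_nonneg (hf0 k) (hg0 k)
  calc ∑ i ∈ s, f i * g i = Real.sqrt ((∑ i ∈ s, f i * g i) ^ 2) := (Real.sqrt_sq h4).symm
    _ ≤ Real.sqrt ((∑' k, f k ^ 2) * ∑' k, g k ^ 2) := by
        apply Real.sqrt_le_sqrt
        calc (∑ i ∈ s, f i * g i) ^ 2 ≤ (∑ k ∈ s, f k ^ 2) * ∑ k ∈ s, g k ^ 2 := h1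
          _ ≤ (∑' k, f k ^ 2) * ∑' k, g k ^ 2 := by
              apply mul_le_mul h2 h3 (Finset.sum_nonneg fun k _ => sq_nonneg _)
              exact tsum_nonneg fun k => sq_nonneg _
    _ = Real.sqrt (∑' k, f k ^ 2) * Real.sqrt (∑' k, g k ^ 2) :=
        Real.sqrt_mul (tsum_nonneg fun k => sq_nonneg _) _

example := 1


def bb (k : ℤ) : ℝ := 1 + |(2 * k : ℤ)|

lemma one_le_bb (k : ℤ) : 1 ≤ bb k := by
  have : (0:ℝ) ≤ |(2 * k : ℤ)| := by positivity
  unfold bb; linarith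

lemma bb_pos (k : ℤ) : 0 < bb k := lt_of_lt_of_le one_pos (one_le_bb k)

lemma wtp_eq (m : ℕ) (k : ℤ) : wtp (m : ℝ) k = bb k ^ (2 * m) := by
  unfold wtp bb
  rw [show (2 * (m:ℝ)) = ((2 * m : ℕ) : ℝ) by push_cast; ring, Real.rpow_natCast]

lemma wtp_neg_eq (m : ℕ) (k : ℤ) : wtp (-(m : ℝ)) k = (bb k ^ (2 * m))⁻¹ := by
  unfold wtp bb
  rw [show (2 * (-(m:ℝ))) = -((2 * m : ℕ) : ℝ) by push_cast; ring,
    Real.rpow_neg (by positivity), Real.rpow_natCast]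

lemma summable_inv_w (m : ℕ) (hm : 1 ≤ m) : Summable fun k : ℤ => (bb k ^ (2 * m))⁻¹ := by
  have h2 : Summable fun k : ℤ => 1 / (k : ℝ) ^ 2 := Real.summable_one_div_int_pow.mpr one_lt_two
  have h3 : Summable fun k : ℤ => (if k = 0 then (1:ℝ) else 0) :=
    summable_of_ne_finset_zero (s := ({0} : Finset ℤ)) (by intro k hk; simp only [Finset.mem_singleton] at hk; simp [hk])
  refine Summable.of_nonneg_of_le (fun k => inv_nonneg.mpr (pow_nonneg (bb_pos k).le _)) (fun k => ?_) (h2.add h3)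
  by_cases hk : k = 0
  · subst hk; simp [bb]
  · have hb : (k:ℝ)^2 ≤ bb k ^ (2 * m) := by
      have h1 : |(k:ℝ)| ≤ bb k := by
        unfold bb
        push_cast
        rw [abs_mul]
        simp only [_root_.abs_of_nonneg, abs_mul, Nat.abs_ofNat]
        nlinarith [abs_nonneg (k:ℝ)]
      have h2' : (k:ℝ)^2 ≤ bb k ^ 2 := by
        rw [← _root_.sq_abs ((k:ℝ))]
        exact pow_le_pow_left₀ (abs_nonneg _) h1 2
      calc (k:ℝ)^2 ≤ bb k ^ 2 := h2'
        _ ≤ bb k ^ (2 * m) := pow_le_pow_right₀ (one_le_bb k) (by omega)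
    have hk2 : (0:ℝ) < (k:ℝ)^2 := by
      have : (k:ℝ) ≠ 0 := Int.cast_ne_zero.mpr hk
      positivity
    simp only [hk, if_neg, if_false]
    rw [add_zero]
    rw [one_div]
    exact inv_anti₀ hk2 hb

lemma cplus_nonneg (m : ℕ) (k : ℤ) : 0 ≤ cplus m k := by
  unfold cplus
  rw [show 2 * m = m * 2 by ring, pow_mul]
  positivity

lemma cplus_le (m : ℕ) (k : ℤ) : cplus m k ≤ Real.pi ^ (2*m) * bb k ^ (2 * m) := by
  unfold cplus
  have h : |2 * Real.pi * (k:ℝ)| ≤ Real.pi * bb k := by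
    rw [abs_mul, abs_mul]
    have hpi : (0:ℝ) ≤ Real.pi := Real.pi_nonneg
    have : |(k:ℝ)| * 2 ≤ bb k := by
      unfold bb; push_cast; rw [abs_mul]; simp only [_root_.abs_of_nonneg, abs_mul, Nat.abs_ofNat]; nlinarith [abs_nonneg (k:ℝ)]
    calc |(2:ℝ)| * |Real.pi| * |(k:ℝ)| = Real.pi * (|(k:ℝ)| * 2) := by
          rw [_root_.abs_of_nonneg hpi, _root_.abs_of_nonneg (by norm_num : (0:ℝ) ≤ 2)]; ring
      _ ≤ Real.pi * bb k := by nlinarith [abs_nonneg (k:ℝ)]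
  calc (2 * Real.pi * (k:ℝ)) ^ (2*m) = |2 * Real.pi * (k:ℝ)| ^ (2*m) := by
        rw [mul_comm 2 m, pow_mul, pow_mul, ← _root_.abs_pow, _root_.sq_abs]
    _ ≤ (Real.pi * bb k) ^ (2*m) := pow_le_pow_left₀ (abs_nonneg _) h _
    _ = Real.pi ^ (2*m) * bb k ^ (2*m) := mul_pow _ _ _

lemma w_le (m : ℕ) (k : ℤ) : bb k ^ (2 * m) ≤ 4 ^ m * (1 + cplus m k) := by
  have hπ : (1:ℝ) ≤ Real.pi := by linarith [Real.pi_gt_three]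
  have h1 : bb k ≤ 2 * max 1 |(2*(k:ℝ))| := by
    unfold bb
    push_cast
    rcases le_total 1 |(2*(k:ℝ))| with h | h
    · rw [max_eq_right h]; nlinarith [abs_nonneg (2*(k:ℝ))]
    · rw [max_eq_left h]; nlinarith [abs_nonneg (2*(k:ℝ))]
  have h2 : bb k ^ (2*m) ≤ (2 * max 1 |(2*(k:ℝ))|) ^ (2*m) :=
    pow_le_pow_left₀ (le_of_lt (bb_pos k)) h1 _
  have h3 : (2 * max 1 |(2*(k:ℝ))|) ^ (2*m) = 4^m * (max 1 |(2*(k:ℝ))|)^(2*m) := by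
    rw [mul_pow, show (4:ℝ)^m = 2^(2*m) by rw [show (4:ℝ) = 2^2 by norm_num, ← pow_mul]]
  have h4 : (max 1 |(2*(k:ℝ))|)^(2*m) ≤ 1 + cplus m k := by
    rcases le_total 1 |(2*(k:ℝ))| with h | h
    · rw [max_eq_right h]
      have : |(2*(k:ℝ))|^(2*m) ≤ cplus m k := by
        unfold cplus
        rw [show (2 * Real.pi * (k:ℝ))^(2*m) = |2 * Real.pi * (k:ℝ)|^(2*m) by
          rw [mul_comm 2 m, pow_mul, pow_mul, ← _root_.abs_pow, _root_.sq_abs]]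
        apply pow_le_pow_left₀ (abs_nonneg _)
        rw [abs_mul, abs_mul, abs_mul]
        have h0 : (0:ℝ) ≤ |(k:ℝ)| := abs_nonneg _
        rw [_root_.abs_of_nonneg Real.pi_nonneg, _root_.abs_of_nonneg (by norm_num : (0:ℝ) ≤ 2)]
        nlinarith [abs_nonneg (k:ℝ)]
      linarith [cplus_nonneg m k]
    · rw [max_eq_left h]
      simp only [one_pow]
      linarith [cplus_nonneg m k]
  calc bb k ^ (2*m) ≤ 4^m * (max 1 |(2*(k:ℝ))|)^(2*m) := by rw [← h3]; exact h2
    _ ≤ 4^m * (1 + cplus m k) := by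
        apply mul_le_mul_of_nonneg_left h4 (by positivity)

lemma bb_peetre (m : ℕ) (k j : ℤ) : bb (k - j) ^ m ≤ 2 ^ m * (bb k ^ m + bb j ^ m) := by
  have h1 : bb (k - j) ≤ bb k + bb j := by
    unfold bb; push_cast
    have := abs_sub (2*(k:ℝ)) (2*(j:ℝ))
    rw [show (2*((k:ℝ) - j)) = 2*(k:ℝ) - 2*(j:ℝ) by ring]
    have h := abs_sub_abs_le_abs_sub (2*(k:ℝ)) (2*(j:ℝ))
    have habs : |2*(k:ℝ) - 2*(j:ℝ)| ≤ |2*(k:ℝ)| + |2*(j:ℝ)| := abs_sub _ _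
    linarith
  have h2 : bb k + bb j ≤ 2 * max (bb k) (bb j) := by
    rcases le_total (bb k) (bb j) with h | h
    · rw [max_eq_right h]; linarith
    · rw [max_eq_left h]; linarith
  calc bb (k-j) ^ m ≤ (2 * max (bb k) (bb j)) ^ m :=
        pow_le_pow_left₀ (le_of_lt (bb_pos _)) (le_trans h1 h2) m
    _ = 2^m * (max (bb k) (bb j))^m := mul_pow _ _ _
    _ ≤ 2^m * (bb k ^ m + bb j ^ m) := by
        apply mul_le_mul_of_nonneg_left _ (by positivity)
        rcases le_total (bb k) (bb j) with h | h
        · rw [max_eq_right h]; nlinarith [pow_nonneg (le_of_lt (bb_pos k)) m,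
            pow_le_pow_left₀ (le_of_lt (bb_pos k)) h m]
        · rw [max_eq_left h]; nlinarith [pow_nonneg (le_of_lt (bb_pos j)) m,
            pow_le_pow_left₀ (le_of_lt (bb_pos j)) h m]

def ww (m : ℕ) (k : ℤ) : ℝ := bb k ^ (2 * m)

lemma ww_nonneg (m : ℕ) (k : ℤ) : 0 ≤ ww m k := pow_nonneg (bb_pos k).le _

lemma one_le_ww (m : ℕ) (k : ℤ) : 1 ≤ ww m k := one_le_pow₀ (one_le_bb k)

lemma sqrt_ww (m : ℕ) (k : ℤ) : Real.sqrt (ww m k) = bb k ^ m := by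
  rw [ww, mul_comm 2 m, pow_mul, Real.sqrt_sq (pow_nonneg (bb_pos k).le m)]

def Wf (m : ℕ) (V : ℤ → ℂ) (k : ℤ) : ℝ := Real.sqrt ((ww m k)⁻¹) * ‖V k‖

lemma Wf_nonneg (m : ℕ) (V : ℤ → ℂ) (k : ℤ) : 0 ≤ Wf m V k := by
  unfold Wf; positivity

lemma normV_eq (m : ℕ) (V : ℤ → ℂ) (k : ℤ) : ‖V k‖ = bb k ^ m * Wf m V k := by
  unfold Wf
  rw [Real.sqrt_inv, sqrt_ww, ← mul_assoc, mul_inv_cancel₀ (pow_ne_zero m (bb_pos k).ne'), one_mul]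

lemma Wf_sq_summable (m : ℕ) (V : ℤ → ℂ)
    (hV : Summable fun k : ℤ => wtp (-(m : ℝ)) k * ‖V k‖ ^ 2) :
    Summable fun k => Wf m V k ^ 2 := by
  refine hV.congr fun k => ?_
  rw [wtp_neg_eq, Wf, mul_pow, Real.sq_sqrt (inv_nonneg.mpr (ww_nonneg m k))]
  rfl

/-- Young-type estimate: double sum `∑_{j,k} y j W(k-j) x k`. -/
lemma young_cs (m : ℕ) {W x y : ℤ → ℝ} (hW0 : ∀ k, 0 ≤ W k) (hx0 : ∀ k, 0 ≤ x k)
    (hy0 : ∀ k, 0 ≤ y k)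
    (hW : Summable fun k => W k ^ 2) (hx : Summable fun k => x k ^ 2) (hy : Summable y) :
    Summable (fun p : ℤ × ℤ => y p.1 * (W (p.2 - p.1) * x p.2)) ∧
      ∑' p : ℤ × ℤ, y p.1 * (W (p.2 - p.1) * x p.2) ≤
        (∑' k, y k) * (Real.sqrt (∑' k, W k ^ 2) * Real.sqrt (∑' k, x k ^ 2)) := by
  have key : ∀ j : ℤ, Summable (fun k => W (k - j) * x k) ∧
      ∑' k, W (k - j) * x k ≤ Real.sqrt (∑' k, W k ^ 2) * Real.sqrt (∑' k, x k ^ 2) := by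
    intro j
    have hWs : Summable fun k => W (k - j) ^ 2 :=
      ((Equiv.subRight j).summable_iff (f := fun k => W k ^ 2)).2 hW
    have hts : ∑' k, W (k - j) ^ 2 = ∑' k, W k ^ 2 :=
      (Equiv.subRight j).tsum_eq (fun k => W k ^ 2)
    refine ⟨cs_summable (fun k => hW0 _) hx0 hWs hx, ?_⟩
    have := cs_tsum (f := fun k => W (k - j)) (g := x) (fun k => hW0 _) hx0 hWs hx
    rwa [hts] at this
  have hnn : ∀ p : ℤ × ℤ, 0 ≤ y p.1 * (W (p.2 - p.1) * x p.2) := fun p =>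
    mul_nonneg (hy0 _) (mul_nonneg (hW0 _) (hx0 _))
  set C := Real.sqrt (∑' k, W k ^ 2) * Real.sqrt (∑' k, x k ^ 2) with hC
  have hC0 : 0 ≤ C := mul_nonneg (Real.sqrt_nonneg _) (Real.sqrt_nonneg _)
  have hfib : ∀ j : ℤ, Summable fun k => y j * (W (k - j) * x k) := fun j =>
    ((key j).1).mul_left (y j)
  have houter_eq : ∀ j : ℤ, (∑' k, y j * (W (k - j) * x k)) = y j * ∑' k, W (k - j) * x k :=
    fun j => tsum_mul_left
  have houter_le : ∀ j : ℤ, (∑' k, y j * (W (k - j) * x k)) ≤ y j * C := by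
    intro j
    rw [houter_eq j]
    exact mul_le_mul_of_nonneg_left (key j).2 (hy0 j)
  have houter_nonneg : ∀ j : ℤ, 0 ≤ ∑' k, y j * (W (k - j) * x k) := fun j =>
    tsum_nonneg fun k => hnn (j, k)
  have houter_summable : Summable fun j => ∑' k, y j * (W (k - j) * x k) :=
    Summable.of_nonneg_of_le houter_nonneg houter_le (hy.mul_right C)
  have hsum : Summable (fun p : ℤ × ℤ => y p.1 * (W (p.2 - p.1) * x p.2)) :=
    (summable_prod_of_nonneg hnn).2 ⟨hfib, houter_summable⟩
  refine ⟨hsum, ?_⟩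
  rw [Summable.tsum_prod' hsum hfib]
  calc ∑' j, ∑' k, y j * (W (k - j) * x k) ≤ ∑' j, y j * C :=
        Summable.tsum_le_tsum houter_le houter_summable (hy.mul_right C)
    _ = (∑' k, y k) * C := by rw [tsum_mul_right]

lemma ww_eq_sq (m : ℕ) (k : ℤ) : ww m k = (bb k ^ m) ^ 2 := by
  rw [ww, mul_comm, pow_mul]

lemma ell1_summable (m : ℕ) (hm : 1 ≤ m) (u : ℤ → ℂ)
    (hu : Summable fun k => ww m k * ‖u k‖ ^ 2) : Summable fun k => ‖u k‖ := by
  have hf : Summable fun k => Real.sqrt ((ww m k)⁻¹) ^ 2 := by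
    refine (summable_inv_w m hm).congr fun k => ?_
    rw [Real.sq_sqrt (inv_nonneg.mpr (ww_nonneg m k))]; rfl
  have hg : Summable fun k => (Real.sqrt (ww m k) * ‖u k‖) ^ 2 := by
    refine hu.congr fun k => ?_
    rw [mul_pow, Real.sq_sqrt (ww_nonneg m k)]
  have h := cs_summable (fun k => Real.sqrt_nonneg _)
    (fun k => mul_nonneg (Real.sqrt_nonneg _) (norm_nonneg _)) hf hg
  refine h.congr fun k => ?_
  rw [Real.sqrt_inv, ← mul_assoc, inv_mul_cancel₀ (Real.sqrt_ne_zero'.mpr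
    (lt_of_lt_of_le one_pos (one_le_ww m k))), one_mul]

lemma ell1_bound (m : ℕ) (hm : 1 ≤ m) (u : ℤ → ℂ)
    (hu : Summable fun k => ww m k * ‖u k‖ ^ 2) :
    ∑' k, ‖u k‖ ≤ Real.sqrt (∑' k, (ww m k)⁻¹) * Real.sqrt (∑' k, ww m k * ‖u k‖ ^ 2) := by
  have hf : Summable fun k => Real.sqrt ((ww m k)⁻¹) ^ 2 := by
    refine (summable_inv_w m hm).congr fun k => ?_
    rw [Real.sq_sqrt (inv_nonneg.mpr (ww_nonneg m k))]; rfl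
  have hg : Summable fun k => (Real.sqrt (ww m k) * ‖u k‖) ^ 2 := by
    refine hu.congr fun k => ?_
    rw [mul_pow, Real.sq_sqrt (ww_nonneg m k)]
  have h := cs_tsum (fun k => Real.sqrt_nonneg ((ww m k)⁻¹))
    (fun k => mul_nonneg (Real.sqrt_nonneg _) (norm_nonneg _)) hf hg
  have e1 : ∀ k : ℤ, Real.sqrt ((ww m k)⁻¹) * (Real.sqrt (ww m k) * ‖u k‖) = ‖u k‖ := by
    intro k
    rw [Real.sqrt_inv, ← mul_assoc, inv_mul_cancel₀ (Real.sqrt_ne_zero'.mpr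
      (lt_of_lt_of_le one_pos (one_le_ww m k))), one_mul]
  have e2 : (∑' k, Real.sqrt ((ww m k)⁻¹) ^ 2) = ∑' k, (ww m k)⁻¹ :=
    tsum_congr fun k => Real.sq_sqrt (inv_nonneg.mpr (ww_nonneg m k))
  have e3 : (∑' k, (Real.sqrt (ww m k) * ‖u k‖) ^ 2) = ∑' k, ww m k * ‖u k‖ ^ 2 :=
    tsum_congr fun k => by rw [mul_pow, Real.sq_sqrt (ww_nonneg m k)]
  calc ∑' k, ‖u k‖ = ∑' k, Real.sqrt ((ww m k)⁻¹) * (Real.sqrt (ww m k) * ‖u k‖) :=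
        (tsum_congr e1).symm
    _ ≤ _ := h
    _ = _ := by rw [e2, e3]

def Gone (m : ℕ) (V u v : ℤ → ℂ) (p : ℤ × ℤ) : ℝ :=
  ‖u p.1‖ * (Wf m V (p.2 - p.1) * (bb p.2 ^ m * ‖v p.2‖))

def Gtwo (m : ℕ) (V u v : ℤ → ℂ) (p : ℤ × ℤ) : ℝ :=
  ‖v p.1‖ * (Wf m V (-(p.2 - p.1)) * (bb p.2 ^ m * ‖u p.2‖))

lemma xsq_summable (m : ℕ) (v : ℤ → ℂ) (hv : Summable fun k => ww m k * ‖v k‖ ^ 2) :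
    Summable fun k => (bb k ^ m * ‖v k‖) ^ 2 :=
  hv.congr fun k => by rw [ww_eq_sq, mul_pow]

lemma xsq_tsum (m : ℕ) (v : ℤ → ℂ) :
    (∑' k, (bb k ^ m * ‖v k‖) ^ 2) = ∑' k, ww m k * ‖v k‖ ^ 2 :=
  tsum_congr fun k => by rw [ww_eq_sq, mul_pow]

lemma Gone_summable (m : ℕ) (V u v : ℤ → ℂ)
    (hWsq : Summable fun k => Wf m V k ^ 2)
    (hv : Summable fun k => ww m k * ‖v k‖ ^ 2)
    (hul1 : Summable fun k => ‖u k‖) :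
    Summable (Gone m V u v) ∧
      ∑' p, Gone m V u v p ≤ (∑' k, ‖u k‖) *
        (Real.sqrt (∑' k, Wf m V k ^ 2) * Real.sqrt (∑' k, ww m k * ‖v k‖ ^ 2)) := by
  have h := young_cs m (W := Wf m V) (x := fun k => bb k ^ m * ‖v k‖) (y := fun k => ‖u k‖)
    (Wf_nonneg m V) (fun k => mul_nonneg (pow_nonneg (bb_pos _).le m) (norm_nonneg _))
    (fun k => norm_nonneg _) hWsq (xsq_summable m v hv) hul1
  exact ⟨h.1, by rw [← xsq_tsum m v]; exact h.2⟩

lemma Gtwo_summable (m : ℕ) (V u v : ℤ → ℂ)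
    (hWsq : Summable fun k => Wf m V k ^ 2)
    (hu : Summable fun k => ww m k * ‖u k‖ ^ 2)
    (hvl1 : Summable fun k => ‖v k‖) :
    Summable (Gtwo m V u v) ∧
      ∑' p, Gtwo m V u v p ≤ (∑' k, ‖v k‖) *
        (Real.sqrt (∑' k, Wf m V k ^ 2) * Real.sqrt (∑' k, ww m k * ‖u k‖ ^ 2)) := by
  have hWneg : Summable fun k => Wf m V (-k) ^ 2 :=
    ((Equiv.neg ℤ).summable_iff (f := fun k => Wf m V k ^ 2)).2 hWsq
  have hWts : (∑' k, Wf m V (-k) ^ 2) = ∑' k, Wf m V k ^ 2 :=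
    (Equiv.neg ℤ).tsum_eq (fun k => Wf m V k ^ 2)
  have h := young_cs m (W := fun l => Wf m V (-l)) (x := fun k => bb k ^ m * ‖u k‖)
    (y := fun k => ‖v k‖) (fun k => Wf_nonneg m V _)
    (fun k => mul_nonneg (pow_nonneg (bb_pos _).le m) (norm_nonneg _))
    (fun k => norm_nonneg _) hWneg (xsq_summable m u hu) hvl1
  exact ⟨h.1, by rw [← xsq_tsum m u, ← hWts]; exact h.2⟩

/-- The central double-sum estimate. -/
lemma bigF (m : ℕ) (V u v : ℤ → ℂ)
    (hWsq : Summable fun k => Wf m V k ^ 2)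
    (hu : Summable fun k => ww m k * ‖u k‖ ^ 2)
    (hv : Summable fun k => ww m k * ‖v k‖ ^ 2)
    (hul1 : Summable fun k => ‖u k‖) (hvl1 : Summable fun k => ‖v k‖) :
    Summable (fun p : ℤ × ℤ => ‖V (p.2 - p.1)‖ * (‖u p.1‖ * ‖v p.2‖)) ∧
      ∑' p : ℤ × ℤ, ‖V (p.2 - p.1)‖ * (‖u p.1‖ * ‖v p.2‖) ≤
        2 ^ m * Real.sqrt (∑' k, Wf m V k ^ 2) *
          ((∑' k, ‖u k‖) * Real.sqrt (∑' k, ww m k * ‖v k‖ ^ 2) +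
            (∑' k, ‖v k‖) * Real.sqrt (∑' k, ww m k * ‖u k‖ ^ 2)) := by
  obtain ⟨hG1, hB1⟩ := Gone_summable m V u v hWsq hv hul1
  obtain ⟨hG2, hB2⟩ := Gtwo_summable m V u v hWsq hu hvl1
  have hG2' : Summable (fun p : ℤ × ℤ => Gtwo m V u v (p.2, p.1)) :=
    ((Equiv.prodComm ℤ ℤ).summable_iff (f := Gtwo m V u v)).2 hG2
  have hG2ts : (∑' p : ℤ × ℤ, Gtwo m V u v (p.2, p.1)) = ∑' p, Gtwo m V u v p :=
    (Equiv.prodComm ℤ ℤ).tsum_eq (Gtwo m V u v)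
  have hpt : ∀ p : ℤ × ℤ, ‖V (p.2 - p.1)‖ * (‖u p.1‖ * ‖v p.2‖) ≤
      2 ^ m * Gone m V u v p + 2 ^ m * Gtwo m V u v (p.2, p.1) := by
    intro p
    have hd := bb_peetre m p.2 p.1
    have hWnn := Wf_nonneg m V (p.2 - p.1)
    have e2 : Gtwo m V u v (p.2, p.1) =
        ‖v p.2‖ * (Wf m V (p.2 - p.1) * (bb p.1 ^ m * ‖u p.1‖)) := by
      unfold Gtwo
      simp only [neg_sub]
    rw [normV_eq m V (p.2 - p.1), e2]
    unfold Gone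
    have huv : (0:ℝ) ≤ ‖u p.1‖ * ‖v p.2‖ := mul_nonneg (norm_nonneg _) (norm_nonneg _)
    calc bb (p.2 - p.1) ^ m * Wf m V (p.2 - p.1) * (‖u p.1‖ * ‖v p.2‖)
        ≤ (2 ^ m * (bb p.2 ^ m + bb p.1 ^ m)) * (Wf m V (p.2 - p.1) * (‖u p.1‖ * ‖v p.2‖)) := by
          rw [mul_assoc]
          exact mul_le_mul_of_nonneg_right hd (mul_nonneg hWnn huv)
      _ = 2 ^ m * (‖u p.1‖ * (Wf m V (p.2 - p.1) * (bb p.2 ^ m * ‖v p.2‖))) +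
          2 ^ m * (‖v p.2‖ * (Wf m V (p.2 - p.1) * (bb p.1 ^ m * ‖u p.1‖))) := by ring
  have hnnF : ∀ p : ℤ × ℤ, 0 ≤ ‖V (p.2 - p.1)‖ * (‖u p.1‖ * ‖v p.2‖) := fun p => by positivity
  have hdom : Summable (fun p : ℤ × ℤ =>
      2 ^ m * Gone m V u v p + 2 ^ m * Gtwo m V u v (p.2, p.1)) :=
    (hG1.mul_left _).add (hG2'.mul_left _)
  have hF : Summable (fun p : ℤ × ℤ => ‖V (p.2 - p.1)‖ * (‖u p.1‖ * ‖v p.2‖)) :=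
    Summable.of_nonneg_of_le hnnF hpt hdom
  refine ⟨hF, ?_⟩
  calc ∑' p : ℤ × ℤ, ‖V (p.2 - p.1)‖ * (‖u p.1‖ * ‖v p.2‖)
      ≤ ∑' p : ℤ × ℤ, (2 ^ m * Gone m V u v p + 2 ^ m * Gtwo m V u v (p.2, p.1)) :=
        Summable.tsum_le_tsum hpt hF hdom
    _ = 2 ^ m * (∑' p, Gone m V u v p) + 2 ^ m * (∑' p : ℤ × ℤ, Gtwo m V u v (p.2, p.1)) := by
        rw [Summable.tsum_add (hG1.mul_left _) (hG2'.mul_left _), tsum_mul_left, tsum_mul_left]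
    _ ≤ 2 ^ m * ((∑' k, ‖u k‖) * (Real.sqrt (∑' k, Wf m V k ^ 2) *
          Real.sqrt (∑' k, ww m k * ‖v k‖ ^ 2))) +
        2 ^ m * ((∑' k, ‖v k‖) * (Real.sqrt (∑' k, Wf m V k ^ 2) *
          Real.sqrt (∑' k, ww m k * ‖u k‖ ^ 2))) := by
        rw [hG2ts]
        have h2m : (0:ℝ) ≤ 2 ^ m := by positivity
        exact add_le_add (mul_le_mul_of_nonneg_left hB1 h2m)
          (mul_le_mul_of_nonneg_left hB2 h2m)
    _ = _ := by ring

lemma l2_of_dom (m : ℕ) (u : ℤ → ℂ) (hu : Summable fun k => ww m k * ‖u k‖ ^ 2) :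
    Summable fun k => ‖u k‖ ^ 2 := by
  refine Summable.of_nonneg_of_le (fun k => sq_nonneg _) (fun k => ?_) hu
  calc ‖u k‖ ^ 2 = 1 * ‖u k‖ ^ 2 := (one_mul _).symm
    _ ≤ ww m k * ‖u k‖ ^ 2 := mul_le_mul_of_nonneg_right (one_le_ww m k) (sq_nonneg _)

lemma conv_norm_summable (m : ℕ) (V u : ℤ → ℂ)
    (hWsq : Summable fun k => Wf m V k ^ 2)
    (hu : Summable fun k => ww m k * ‖u k‖ ^ 2)
    (hul1 : Summable fun k => ‖u k‖) (k : ℤ) :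
    Summable fun j => ‖V (k - j) * u j‖ := by
  have hWshift : Summable fun j => Wf m V (k - j) ^ 2 :=
    ((Equiv.subLeft k).summable_iff (f := fun l => Wf m V l ^ 2)).2 hWsq
  have hu2 : Summable fun j => ‖u j‖ ^ 2 := l2_of_dom m u hu
  have h1 : Summable fun j => Wf m V (k - j) * ‖u j‖ :=
    cs_summable (fun j => Wf_nonneg m V _) (fun j => norm_nonneg _) hWshift hu2
  have h2 : Summable fun j => Wf m V (k - j) * (bb j ^ m * ‖u j‖) :=
    cs_summable (fun j => Wf_nonneg m V _)
      (fun j => mul_nonneg (pow_nonneg (bb_pos _).le m) (norm_nonneg _)) hWshift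
      (xsq_summable m u hu)
  refine Summable.of_nonneg_of_le (fun j => norm_nonneg _) (fun j => ?_)
    (((h1.mul_left (2 ^ m * bb k ^ m)).add (h2.mul_left (2 ^ m))))
  rw [norm_mul, normV_eq m V (k - j)]
  have hd := bb_peetre m k j
  have hWnn := Wf_nonneg m V (k - j)
  calc bb (k - j) ^ m * Wf m V (k - j) * ‖u j‖
      ≤ 2 ^ m * (bb k ^ m + bb j ^ m) * (Wf m V (k - j) * ‖u j‖) := by
        rw [mul_assoc]
        exact mul_le_mul_of_nonneg_right hd (mul_nonneg hWnn (norm_nonneg _))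
    _ = 2 ^ m * bb k ^ m * (Wf m V (k - j) * ‖u j‖) +
        2 ^ m * (Wf m V (k - j) * (bb j ^ m * ‖u j‖)) := by ring

/-- Summability and bound for the potential part of the form. -/
lemma B_bound (m : ℕ) (V u v : ℤ → ℂ)
    (hWsq : Summable fun k => Wf m V k ^ 2)
    (hu : Summable fun k => ww m k * ‖u k‖ ^ 2)
    (hv : Summable fun k => ww m k * ‖v k‖ ^ 2)
    (hul1 : Summable fun k => ‖u k‖) (hvl1 : Summable fun k => ‖v k‖) :
    Summable (fun k => conv V u k * (starRingEnd ℂ) (v k)) ∧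
      ‖∑' k, conv V u k * (starRingEnd ℂ) (v k)‖ ≤
        2 ^ m * Real.sqrt (∑' k, Wf m V k ^ 2) *
          ((∑' k, ‖u k‖) * Real.sqrt (∑' k, ww m k * ‖v k‖ ^ 2) +
            (∑' k, ‖v k‖) * Real.sqrt (∑' k, ww m k * ‖u k‖ ^ 2)) := by
  obtain ⟨hF, hFB⟩ := bigF m V u v hWsq hu hv hul1 hvl1
  have hnn2 : ∀ p : ℤ × ℤ, 0 ≤ ‖V (p.1 - p.2)‖ * (‖u p.2‖ * ‖v p.1‖) := fun p => by positivity
  have hF2 : Summable (fun p : ℤ × ℤ => ‖V (p.1 - p.2)‖ * (‖u p.2‖ * ‖v p.1‖)) :=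
    ((Equiv.prodComm ℤ ℤ).summable_iff
      (f := fun p : ℤ × ℤ => ‖V (p.2 - p.1)‖ * (‖u p.1‖ * ‖v p.2‖))).2 hF
  have hF2ts : (∑' p : ℤ × ℤ, ‖V (p.1 - p.2)‖ * (‖u p.2‖ * ‖v p.1‖)) =
      ∑' p : ℤ × ℤ, ‖V (p.2 - p.1)‖ * (‖u p.1‖ * ‖v p.2‖) :=
    (Equiv.prodComm ℤ ℤ).tsum_eq
      (f := fun p : ℤ × ℤ => ‖V (p.2 - p.1)‖ * (‖u p.1‖ * ‖v p.2‖))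
  have hfib : ∀ k : ℤ, Summable fun j => ‖V (k - j)‖ * (‖u j‖ * ‖v k‖) := by
    intro k
    refine ((conv_norm_summable m V u hWsq hu hul1 k).mul_right ‖v k‖).congr fun j => ?_
    rw [norm_mul]; ring
  have houter : Summable fun k => ∑' j, ‖V (k - j)‖ * (‖u j‖ * ‖v k‖) :=
    ((summable_prod_of_nonneg hnn2).1 hF2).2
  have htse : (∑' k, ∑' j, ‖V (k - j)‖ * (‖u j‖ * ‖v k‖)) =
      ∑' p : ℤ × ℤ, ‖V (p.1 - p.2)‖ * (‖u p.2‖ * ‖v p.1‖) :=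
    (Summable.tsum_prod' hF2 hfib).symm
  have hbnd : ∀ k : ℤ, ‖conv V u k * (starRingEnd ℂ) (v k)‖ ≤
      ∑' j, ‖V (k - j)‖ * (‖u j‖ * ‖v k‖) := by
    intro k
    rw [norm_mul, RingHomIsometric.norm_map]
    have h1 : ‖conv V u k‖ ≤ ∑' j, ‖V (k - j) * u j‖ :=
      norm_tsum_le_tsum_norm (conv_norm_summable m V u hWsq hu hul1 k)
    calc ‖conv V u k‖ * ‖v k‖ ≤ (∑' j, ‖V (k - j) * u j‖) * ‖v k‖ :=
          mul_le_mul_of_nonneg_right h1 (norm_nonneg _)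
      _ = ∑' j, ‖V (k - j)‖ * (‖u j‖ * ‖v k‖) := by
          rw [← tsum_mul_right]
          exact tsum_congr fun j => by rw [norm_mul]; ring
  have hsummB : Summable (fun k => conv V u k * (starRingEnd ℂ) (v k)) :=
    Summable.of_norm_bounded houter hbnd
  have hsummN : Summable fun k => ‖conv V u k * (starRingEnd ℂ) (v k)‖ :=
    Summable.of_nonneg_of_le (fun k => norm_nonneg _) hbnd houter
  refine ⟨hsummB, ?_⟩
  calc ‖∑' k, conv V u k * (starRingEnd ℂ) (v k)‖
      ≤ ∑' k, ‖conv V u k * (starRingEnd ℂ) (v k)‖ :=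
        norm_tsum_le_tsum_norm hsummN
    _ ≤ ∑' k, ∑' j, ‖V (k - j)‖ * (‖u j‖ * ‖v k‖) :=
        Summable.tsum_le_tsum hbnd hsummN houter
    _ = ∑' p : ℤ × ℤ, ‖V (p.2 - p.1)‖ * (‖u p.1‖ * ‖v p.2‖) := by rw [htse, hF2ts]
    _ ≤ _ := hFB

/-- The quadratic (kinetic) part. -/
lemma A_summable (m : ℕ) (u : ℤ → ℂ) (hu : Summable fun k => ww m k * ‖u k‖ ^ 2) :
    Summable fun k => cplus m k * ‖u k‖ ^ 2 := by
  refine Summable.of_nonneg_of_le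
    (fun k => mul_nonneg (cplus_nonneg m k) (sq_nonneg _)) (fun k => ?_)
    (hu.mul_left (Real.pi ^ (2 * m)))
  have := cplus_le m k
  have h2 : bb k ^ (2 * m) = ww m k := rfl
  calc cplus m k * ‖u k‖ ^ 2 ≤ Real.pi ^ (2 * m) * bb k ^ (2 * m) * ‖u k‖ ^ 2 :=
        mul_le_mul_of_nonneg_right this (sq_nonneg _)
    _ = Real.pi ^ (2 * m) * (ww m k * ‖u k‖ ^ 2) := by rw [h2]; ring

lemma A_tsum (m : ℕ) (u : ℤ → ℂ) :
    (∑' k, ((cplus m k : ℝ) : ℂ) * u k * (starRingEnd ℂ) (u k)) =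
      (((∑' k, cplus m k * ‖u k‖ ^ 2 : ℝ)) : ℂ) := by
  rw [Complex.ofReal_tsum]
  refine tsum_congr fun k => ?_
  rw [mul_assoc, Complex.mul_conj]
  rw [Complex.ofReal_mul]
  congr 1
  rw [Complex.normSq_eq_norm_sq]

lemma lp_sq_summable (u : E) : Summable fun k => ‖u k‖ ^ 2 := by
  have h : (0:ℝ) < (2 : ENNReal).toReal := by norm_num
  have := (lp.memℓp u).summable h
  refine this.congr fun k => ?_
  have : ((2 : ENNReal).toReal) = ((2:ℕ):ℝ) := by norm_num
  rw [this, Real.rpow_natCast]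

lemma lp_norm_sq (u : E) : ‖u‖ ^ 2 = ∑' k, ‖u k‖ ^ 2 := by
  have h : (0:ℝ) < (2 : ENNReal).toReal := by norm_num
  have := lp.norm_rpow_eq_tsum h u
  have h2 : ((2 : ENNReal).toReal) = ((2:ℕ):ℝ) := by norm_num
  rw [h2, Real.rpow_natCast] at this
  rw [this]
  exact tsum_congr fun k => by rw [Real.rpow_natCast]

lemma lp_coe_sub (u v : E) (k : ℤ) : (u - v : E) k = u k - v k := by
  rw [lp.coeFn_sub]; rfl

lemma lp_apply_le (u : E) (k : ℤ) : ‖u k‖ ≤ ‖u‖ :=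
  lp.norm_apply_le_norm (by norm_num) u k

lemma exists_tail {g : ℤ → ℝ} (hg : Summable g) (hg0 : ∀ k, 0 ≤ g k) {δ : ℝ} (hδ : 0 < δ) :
    ∃ s : Finset ℤ, (∑' k : {k : ℤ // k ∉ s}, g k) < δ := by
  have h1 : ∀ᶠ s' : Finset ℤ in atTop, (∑' k, g k) - δ < ∑ k ∈ s', g k :=
    hg.hasSum.eventually (eventually_gt_nhds (sub_lt_self _ hδ))
  obtain ⟨s, hs⟩ := h1.exists
  refine ⟨s, ?_⟩
  have h2 := Summable.sum_add_tsum_subtype_compl hg s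
  linarith

lemma tsum_subtype_le' {g : ℤ → ℝ} (hg : Summable g) (hg0 : ∀ k, 0 ≤ g k) (s : Finset ℤ) :
    (∑' k : {k : ℤ // k ∉ s}, g k) ≤ ∑' k, g k := by
  have h2 := Summable.sum_add_tsum_subtype_compl hg s
  have h4 : (0:ℝ) ≤ ∑ k ∈ s, g k := Finset.sum_nonneg fun k _ => hg0 k
  linarith

lemma tail_bound (m : ℕ) (hm : 1 ≤ m) (u : ℤ → ℂ)
    (hu : Summable fun k => ww m k * ‖u k‖ ^ 2) (s : Finset ℤ) :
    (∑' k : {k : ℤ // k ∉ s}, ‖u (k : ℤ)‖) ≤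
      Real.sqrt (∑' k : {k : ℤ // k ∉ s}, (ww m (k : ℤ))⁻¹) *
        Real.sqrt (∑' k, ww m k * ‖u k‖ ^ 2) := by
  have hf : Summable fun k : {k : ℤ // k ∉ s} => Real.sqrt ((ww m (k : ℤ))⁻¹) ^ 2 := by
    refine (((summable_inv_w m hm).congr fun k => rfl :
      Summable fun k : ℤ => (ww m k)⁻¹).subtype _).congr fun k => ?_
    rw [Real.sq_sqrt (inv_nonneg.mpr (ww_nonneg m _))]; rfl
  have hg : Summable fun k : {k : ℤ // k ∉ s} => (Real.sqrt (ww m (k : ℤ)) * ‖u (k : ℤ)‖) ^ 2 := by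
    refine (hu.subtype _).congr fun k => ?_
    rw [mul_pow, Real.sq_sqrt (ww_nonneg m _)]; rfl
  have h := cs_tsum (f := fun k : {k : ℤ // k ∉ s} => Real.sqrt ((ww m (k : ℤ))⁻¹))
    (g := fun k : {k : ℤ // k ∉ s} => Real.sqrt (ww m (k : ℤ)) * ‖u (k : ℤ)‖)
    (fun k => Real.sqrt_nonneg _) (fun k => mul_nonneg (Real.sqrt_nonneg _) (norm_nonneg _))
    hf hg
  have e1 : ∀ k : {k : ℤ // k ∉ s},
      Real.sqrt ((ww m (k : ℤ))⁻¹) * (Real.sqrt (ww m (k : ℤ)) * ‖u (k : ℤ)‖) = ‖u (k : ℤ)‖ := by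
    intro k
    rw [Real.sqrt_inv, ← mul_assoc, inv_mul_cancel₀ (Real.sqrt_ne_zero'.mpr
      (lt_of_lt_of_le one_pos (one_le_ww m _))), one_mul]
  have e2 : (∑' k : {k : ℤ // k ∉ s}, Real.sqrt ((ww m (k : ℤ))⁻¹) ^ 2) =
      ∑' k : {k : ℤ // k ∉ s}, (ww m (k : ℤ))⁻¹ :=
    tsum_congr fun k => Real.sq_sqrt (inv_nonneg.mpr (ww_nonneg m _))
  have e3 : (∑' k : {k : ℤ // k ∉ s}, (Real.sqrt (ww m (k : ℤ)) * ‖u (k : ℤ)‖) ^ 2) =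
      ∑' k : {k : ℤ // k ∉ s}, ww m (k : ℤ) * ‖u (k : ℤ)‖ ^ 2 :=
    tsum_congr fun k => by rw [mul_pow, Real.sq_sqrt (ww_nonneg m _)]
  have e4 : (∑' k : {k : ℤ // k ∉ s}, ww m (k : ℤ) * ‖u (k : ℤ)‖ ^ 2) ≤
      ∑' k, ww m k * ‖u k‖ ^ 2 :=
    tsum_subtype_le' hu (fun k => mul_nonneg (ww_nonneg m k) (sq_nonneg _)) s
  calc (∑' k : {k : ℤ // k ∉ s}, ‖u (k : ℤ)‖)
      = ∑' k : {k : ℤ // k ∉ s},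
          Real.sqrt ((ww m (k : ℤ))⁻¹) * (Real.sqrt (ww m (k : ℤ)) * ‖u (k : ℤ)‖) :=
        (tsum_congr e1).symm
    _ ≤ Real.sqrt (∑' k : {k : ℤ // k ∉ s}, Real.sqrt ((ww m (k : ℤ))⁻¹) ^ 2) *
        Real.sqrt (∑' k : {k : ℤ // k ∉ s}, (Real.sqrt (ww m (k : ℤ)) * ‖u (k : ℤ)‖) ^ 2) := h
    _ ≤ _ := by
        rw [e2, e3]
        exact mul_le_mul_of_nonneg_left (Real.sqrt_le_sqrt e4) (Real.sqrt_nonneg _)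

lemma finite_part_bound (u : E) (s : Finset ℤ) :
    (∑ k ∈ s, ‖u k‖) ≤ Real.sqrt (s.card) * ‖u‖ := by
  have h1 : (∑ k ∈ s, ‖u k‖) ^ 2 ≤ (s.card : ℝ) * ∑ k ∈ s, ‖u k‖ ^ 2 :=
    sq_sum_le_card_mul_sum_sq
  have h2 : (∑ k ∈ s, ‖u k‖ ^ 2) ≤ ‖u‖ ^ 2 := by
    rw [lp_norm_sq]
    exact Summable.sum_le_tsum s (fun k _ => sq_nonneg _) (lp_sq_summable u)
  have h3 : (0:ℝ) ≤ ∑ k ∈ s, ‖u k‖ := Finset.sum_nonneg fun k _ => norm_nonneg _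
  calc (∑ k ∈ s, ‖u k‖) = Real.sqrt ((∑ k ∈ s, ‖u k‖) ^ 2) := (Real.sqrt_sq h3).symm
    _ ≤ Real.sqrt ((s.card : ℝ) * ‖u‖ ^ 2) := by
        apply Real.sqrt_le_sqrt
        calc (∑ k ∈ s, ‖u k‖) ^ 2 ≤ (s.card : ℝ) * ∑ k ∈ s, ‖u k‖ ^ 2 := h1
          _ ≤ (s.card : ℝ) * ‖u‖ ^ 2 := by
              apply mul_le_mul_of_nonneg_left h2 (Nat.cast_nonneg _)
    _ = Real.sqrt (s.card) * ‖u‖ := by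
        rw [Real.sqrt_mul (Nat.cast_nonneg _), Real.sqrt_sq (norm_nonneg _)]

lemma ell1_split (m : ℕ) (hm : 1 ≤ m) (u : E)
    (hu : Summable fun k => ww m k * ‖u k‖ ^ 2) (s : Finset ℤ) :
    (∑' k, ‖u k‖) ≤ Real.sqrt (s.card) * ‖u‖ +
      Real.sqrt (∑' k : {k : ℤ // k ∉ s}, (ww m (k : ℤ))⁻¹) *
        Real.sqrt (∑' k, ww m k * ‖u k‖ ^ 2) := by
  have hl1 : Summable fun k => ‖u k‖ := ell1_summable m hm (fun k => u k) hu
  have hsplit := Summable.sum_add_tsum_subtype_compl hl1 s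
  have := tail_bound m hm (fun k => u k) hu s
  have hfin := finite_part_bound u s
  linarith

lemma dom_add_raw (m : ℕ) {g h : ℤ → ℂ}
    (hg : Summable fun k => ww m k * ‖g k‖ ^ 2) (hh : Summable fun k => ww m k * ‖h k‖ ^ 2) :
    Summable fun k => ww m k * ‖g k + h k‖ ^ 2 := by
  refine Summable.of_nonneg_of_le (fun k => mul_nonneg (ww_nonneg m k) (sq_nonneg _))
    (fun k => ?_) (((hg.add hh).mul_left 2))
  have h1 : ‖g k + h k‖ ≤ ‖g k‖ + ‖h k‖ := norm_add_le _ _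
  have h2 : ‖g k + h k‖ ^ 2 ≤ (‖g k‖ + ‖h k‖) ^ 2 :=
    pow_le_pow_left₀ (norm_nonneg _) h1 2
  have h3 : (‖g k‖ + ‖h k‖) ^ 2 ≤ 2 * (‖g k‖ ^ 2 + ‖h k‖ ^ 2) := by nlinarith [sq_nonneg (‖g k‖ - ‖h k‖)]
  calc ww m k * ‖g k + h k‖ ^ 2 ≤ ww m k * (2 * (‖g k‖ ^ 2 + ‖h k‖ ^ 2)) :=
        mul_le_mul_of_nonneg_left (h2.trans h3) (ww_nonneg m k)
    _ = 2 * (ww m k * ‖g k‖ ^ 2 + ww m k * ‖h k‖ ^ 2) := by ring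

lemma amgm' {a b e c : ℝ} (ha : 0 ≤ a) (hb : 0 ≤ b) (he : 0 < e) (hc : 0 < c)
    (hec : 1/4 ≤ e * c) : a * b ≤ e * a ^ 2 + c * b ^ 2 := by
  have h1 := sq_nonneg (2 * e * a - b)
  have h2 : b ^ 2 ≤ 4 * (e * c) * b ^ 2 := by nlinarith [sq_nonneg b]
  nlinarith [mul_pos he hc, sq_nonneg a, sq_nonneg b]

lemma dom_iff (m : ℕ) (u : E) :
    u ∈ domt m ↔ Summable fun k => ww m k * ‖u k‖ ^ 2 := by
  constructor
  · intro h; exact h.congr fun k => by rw [wtp_eq]; rfl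
  · intro h; exact h.congr fun k => by rw [wtp_eq]; rfl

lemma summable_inv_ww (m : ℕ) (hm : 1 ≤ m) : Summable fun k : ℤ => (ww m k)⁻¹ :=
  summable_inv_w m hm

lemma tform_eq (m : ℕ) (V : ℤ → ℂ) (u : E) :
    tform m V u u = ((∑' k, cplus m k * ‖u k‖ ^ 2 : ℝ) : ℂ) +
      ∑' k : ℤ, conv V (fun j => u j) k * (starRingEnd ℂ) (u k) := by
  rw [tform, A_tsum m (fun k => u k)]

/-- Master estimate: bound of the potential part, decomposition of `tform`. -/
lemma master (m : ℕ) (hm : 1 ≤ m) (V : ℤ → ℂ)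
    (hV : Summable fun k : ℤ => wtp (-(m : ℝ)) k * ‖V k‖ ^ 2) :
    ∃ K : ℝ, 0 ≤ K ∧ ∀ u : E, (Summable fun k => ww m k * ‖u k‖ ^ 2) →
      ‖∑' k : ℤ, conv V (fun j => u j) k * (starRingEnd ℂ) (u k)‖ ≤
        (1/4) * (∑' k, cplus m k * ‖u k‖ ^ 2) + K * ‖u‖ ^ 2 := by
  have hWsq := Wf_sq_summable m V hV
  set NW := Real.sqrt (∑' k, Wf m V k ^ 2) with hNW
  have hNW0 : 0 ≤ NW := Real.sqrt_nonneg _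
  set D := (2:ℝ) ^ m * NW with hD
  have hD0 : 0 ≤ D := by positivity
  set ε := (1:ℝ) / (8 * 4 ^ m) with hε
  have hε0 : (0:ℝ) < ε := by positivity
  set δ := ε / (2 * (D + 1)) with hδ
  have hδ0 : (0:ℝ) < δ := by positivity
  obtain ⟨s, hs⟩ := exists_tail (summable_inv_ww m hm)
    (fun k => inv_nonneg.mpr (ww_nonneg m k)) (show (0:ℝ) < δ ^ 2 by positivity)
  set Cs := Real.sqrt (s.card : ℝ) with hCs
  have hCs0 : 0 ≤ Cs := Real.sqrt_nonneg _
  refine ⟨(2 * D * Cs) ^ 2 * (2 * 4 ^ m) + 1/4, by positivity, ?_⟩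
  intro u hu
  set S := ∑' k, ww m k * ‖u k‖ ^ 2 with hSdef
  have hS0 : 0 ≤ S := tsum_nonneg fun k => mul_nonneg (ww_nonneg m k) (sq_nonneg _)
  set A := ∑' k, cplus m k * ‖u k‖ ^ 2 with hAdef
  have hA0 : 0 ≤ A := tsum_nonneg fun k => mul_nonneg (cplus_nonneg m k) (sq_nonneg _)
  have hl1 : Summable fun k => ‖u k‖ := ell1_summable m hm (fun k => u k) hu
  set L := ∑' k, ‖u k‖ with hLdef
  have hL0 : 0 ≤ L := tsum_nonneg fun k => norm_nonneg _
  have htail : Real.sqrt (∑' k : {k : ℤ // k ∉ s}, (ww m (k : ℤ))⁻¹) ≤ δ := by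
    calc Real.sqrt (∑' k : {k : ℤ // k ∉ s}, (ww m (k : ℤ))⁻¹) ≤ Real.sqrt (δ ^ 2) :=
          Real.sqrt_le_sqrt hs.le
      _ = δ := Real.sqrt_sq hδ0.le
  have hLsplit : L ≤ Cs * ‖u‖ + δ * Real.sqrt S := by
    have h := ell1_split m hm u hu s
    have h2 : Real.sqrt (∑' k : {k : ℤ // k ∉ s}, (ww m (k : ℤ))⁻¹) * Real.sqrt S ≤
        δ * Real.sqrt S := mul_le_mul_of_nonneg_right htail (Real.sqrt_nonneg _)
    calc L ≤ Cs * ‖u‖ + Real.sqrt (∑' k : {k : ℤ // k ∉ s}, (ww m (k : ℤ))⁻¹) *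
          Real.sqrt S := h
      _ ≤ Cs * ‖u‖ + δ * Real.sqrt S := by linarith
  have hB := (B_bound m V (fun k => u k) (fun k => u k) hWsq hu hu hl1 hl1).2
  have hBb : ‖∑' k : ℤ, conv V (fun j => u j) k * (starRingEnd ℂ) (u k)‖ ≤
      2 * D * (L * Real.sqrt S) := by
    calc ‖∑' k : ℤ, conv V (fun j => u j) k * (starRingEnd ℂ) (u k)‖
        ≤ 2 ^ m * NW * (L * Real.sqrt S + L * Real.sqrt S) := hB
      _ = 2 * D * (L * Real.sqrt S) := by rw [hD]; ring
  have hsqS : Real.sqrt S * Real.sqrt S = S := Real.mul_self_sqrt hS0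
  have hstep : 2 * D * (L * Real.sqrt S) ≤
      2 * D * Cs * ‖u‖ * Real.sqrt S + 2 * D * δ * S := by
    have h1 : L * Real.sqrt S ≤ (Cs * ‖u‖ + δ * Real.sqrt S) * Real.sqrt S :=
      mul_le_mul_of_nonneg_right hLsplit (Real.sqrt_nonneg _)
    calc 2 * D * (L * Real.sqrt S) ≤ 2 * D * ((Cs * ‖u‖ + δ * Real.sqrt S) * Real.sqrt S) := by
          apply mul_le_mul_of_nonneg_left h1 (by positivity)
      _ = 2 * D * Cs * ‖u‖ * Real.sqrt S + 2 * D * δ * (Real.sqrt S * Real.sqrt S) := by ring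
      _ = 2 * D * Cs * ‖u‖ * Real.sqrt S + 2 * D * δ * S := by rw [hsqS]
  have hamgm : 2 * D * Cs * ‖u‖ * Real.sqrt S ≤
      ε * (Real.sqrt S) ^ 2 + (2 * 4 ^ m) * (2 * D * Cs * ‖u‖) ^ 2 := by
    have hec : (1:ℝ)/4 ≤ ε * (2 * 4 ^ m) := by
      rw [hε]
      rw [div_mul_eq_mul_div, le_div_iff₀ (by positivity : (0:ℝ) < 8 * 4 ^ m)]
      ring_nf
      nlinarith [pow_pos (show (0:ℝ) < 4 by norm_num) m]
    rw [show 2 * D * Cs * ‖u‖ * Real.sqrt S = Real.sqrt S * (2 * D * Cs * ‖u‖) by ring]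
    exact amgm' (a := Real.sqrt S) (b := 2 * D * Cs * ‖u‖) (Real.sqrt_nonneg _)
      (by positivity) hε0 (by positivity) hec
  have hδbound : 2 * D * δ ≤ ε := by
    rw [hδ]
    rw [div_eq_mul_inv]
    have h1 : 2 * D ≤ 2 * (D + 1) := by linarith
    have h2 : 0 < 2 * (D + 1) := by linarith
    calc 2 * D * (ε * (2 * (D + 1))⁻¹) = (2 * D) / (2 * (D + 1)) * ε := by ring
      _ ≤ 1 * ε := by
          apply mul_le_mul_of_nonneg_right _ hε0.le
          rw [div_le_one h2]; exact h1
      _ = ε := one_mul _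
  have hSA : S ≤ 4 ^ m * (‖u‖ ^ 2 + A) := by
    have hpt : ∀ k : ℤ, ww m k * ‖u k‖ ^ 2 ≤ 4 ^ m * (‖u k‖ ^ 2 + cplus m k * ‖u k‖ ^ 2) := by
      intro k
      have := w_le m k
      have h2 : ww m k * ‖u k‖ ^ 2 ≤ (4 ^ m * (1 + cplus m k)) * ‖u k‖ ^ 2 :=
        mul_le_mul_of_nonneg_right this (sq_nonneg _)
      calc ww m k * ‖u k‖ ^ 2 ≤ (4 ^ m * (1 + cplus m k)) * ‖u k‖ ^ 2 := h2
        _ = 4 ^ m * (‖u k‖ ^ 2 + cplus m k * ‖u k‖ ^ 2) := by ring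
    have hsummR : Summable fun k => 4 ^ m * (‖u k‖ ^ 2 + cplus m k * ‖u k‖ ^ 2) :=
      (((lp_sq_summable u).add (A_summable m (fun k => u k) hu))).mul_left _
    calc S ≤ ∑' k, 4 ^ m * (‖u k‖ ^ 2 + cplus m k * ‖u k‖ ^ 2) :=
          Summable.tsum_le_tsum hpt hu hsummR
      _ = 4 ^ m * ((∑' k, ‖u k‖ ^ 2) + A) := by
          rw [tsum_mul_left, Summable.tsum_add (lp_sq_summable u) (A_summable m (fun k => u k) hu)]
      _ = 4 ^ m * (‖u‖ ^ 2 + A) := by rw [← lp_norm_sq]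
  have hεS : 2 * ε * S ≤ (1/4) * (‖u‖ ^ 2 + A) := by
    have h1 : 2 * ε * S ≤ 2 * ε * (4 ^ m * (‖u‖ ^ 2 + A)) := by
      apply mul_le_mul_of_nonneg_left hSA (by positivity)
    calc 2 * ε * S ≤ 2 * ε * (4 ^ m * (‖u‖ ^ 2 + A)) := h1
      _ = (1/4) * (‖u‖ ^ 2 + A) := by
          rw [hε]; field_simp; ring
  calc ‖∑' k : ℤ, conv V (fun j => u j) k * (starRingEnd ℂ) (u k)‖
      ≤ 2 * D * (L * Real.sqrt S) := hBb
    _ ≤ 2 * D * Cs * ‖u‖ * Real.sqrt S + 2 * D * δ * S := hstep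
    _ ≤ (ε * (Real.sqrt S) ^ 2 + (2 * 4 ^ m) * (2 * D * Cs * ‖u‖) ^ 2) + ε * S := by
        have : 2 * D * δ * S ≤ ε * S := mul_le_mul_of_nonneg_right hδbound hS0
        linarith
    _ = 2 * ε * S + (2 * D * Cs) ^ 2 * (2 * 4 ^ m) * ‖u‖ ^ 2 := by
        rw [sq, hsqS]; ring
    _ ≤ (1/4) * (‖u‖ ^ 2 + A) + (2 * D * Cs) ^ 2 * (2 * 4 ^ m) * ‖u‖ ^ 2 := by
        linarith
    _ = (1/4) * A + ((2 * D * Cs) ^ 2 * (2 * 4 ^ m) + 1/4) * ‖u‖ ^ 2 := by ring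

/-- Upper bound for the whole form in terms of the weighted norm. -/
lemma tform_upper (m : ℕ) (hm : 1 ≤ m) (V : ℤ → ℂ)
    (hV : Summable fun k : ℤ => wtp (-(m : ℝ)) k * ‖V k‖ ^ 2) :
    ∃ C2 : ℝ, 0 ≤ C2 ∧ ∀ u : E, (Summable fun k => ww m k * ‖u k‖ ^ 2) →
      ‖tform m V u u‖ ≤ C2 * (∑' k, ww m k * ‖u k‖ ^ 2) := by
  have hWsq := Wf_sq_summable m V hV
  set NW := Real.sqrt (∑' k, Wf m V k ^ 2) with hNW
  have hNW0 : 0 ≤ NW := Real.sqrt_nonneg _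
  set Kw := Real.sqrt (∑' k : ℤ, (ww m k)⁻¹) with hKw
  have hKw0 : 0 ≤ Kw := Real.sqrt_nonneg _
  refine ⟨Real.pi ^ (2 * m) + 2 ^ m * NW * (2 * Kw), by positivity, ?_⟩
  intro u hu
  set S := ∑' k, ww m k * ‖u k‖ ^ 2 with hSdef
  have hS0 : 0 ≤ S := tsum_nonneg fun k => mul_nonneg (ww_nonneg m k) (sq_nonneg _)
  set A := ∑' k, cplus m k * ‖u k‖ ^ 2 with hAdef
  have hA0 : 0 ≤ A := tsum_nonneg fun k => mul_nonneg (cplus_nonneg m k) (sq_nonneg _)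
  have hl1 : Summable fun k => ‖u k‖ := ell1_summable m hm (fun k => u k) hu
  set L := ∑' k, ‖u k‖ with hLdef
  have hL0 : 0 ≤ L := tsum_nonneg fun k => norm_nonneg _
  have hLb : L ≤ Kw * Real.sqrt S := ell1_bound m hm (fun k => u k) hu
  have hsqS : Real.sqrt S * Real.sqrt S = S := Real.mul_self_sqrt hS0
  have hAb : A ≤ Real.pi ^ (2 * m) * S := by
    have hpt : ∀ k : ℤ, cplus m k * ‖u k‖ ^ 2 ≤ Real.pi ^ (2 * m) * (ww m k * ‖u k‖ ^ 2) := by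
      intro k
      have := cplus_le m k
      calc cplus m k * ‖u k‖ ^ 2 ≤ (Real.pi ^ (2 * m) * bb k ^ (2 * m)) * ‖u k‖ ^ 2 :=
            mul_le_mul_of_nonneg_right this (sq_nonneg _)
        _ = Real.pi ^ (2 * m) * (ww m k * ‖u k‖ ^ 2) := by rw [ww]; ring
    calc A ≤ ∑' k, Real.pi ^ (2 * m) * (ww m k * ‖u k‖ ^ 2) :=
          Summable.tsum_le_tsum hpt (A_summable m (fun k => u k) hu) (hu.mul_left _)
      _ = Real.pi ^ (2 * m) * S := tsum_mul_left
  have hB := (B_bound m V (fun k => u k) (fun k => u k) hWsq hu hu hl1 hl1).2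
  have hBb : ‖∑' k : ℤ, conv V (fun j => u j) k * (starRingEnd ℂ) (u k)‖ ≤
      2 ^ m * NW * (2 * Kw) * S := by
    calc ‖∑' k : ℤ, conv V (fun j => u j) k * (starRingEnd ℂ) (u k)‖
        ≤ 2 ^ m * NW * (L * Real.sqrt S + L * Real.sqrt S) := hB
      _ ≤ 2 ^ m * NW * (Kw * Real.sqrt S * Real.sqrt S + Kw * Real.sqrt S * Real.sqrt S) := by
          apply mul_le_mul_of_nonneg_left _ (by positivity)
          have h1 : L * Real.sqrt S ≤ Kw * Real.sqrt S * Real.sqrt S := by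
            apply mul_le_mul_of_nonneg_right hLb (Real.sqrt_nonneg _)
          linarith
      _ = 2 ^ m * NW * (2 * Kw) * S := by rw [mul_assoc Kw, hsqS]; ring
  rw [tform_eq]
  calc ‖((A : ℝ) : ℂ) + ∑' k : ℤ, conv V (fun j => u j) k * (starRingEnd ℂ) (u k)‖
      ≤ ‖((A : ℝ) : ℂ)‖ + ‖∑' k : ℤ, conv V (fun j => u j) k * (starRingEnd ℂ) (u k)‖ :=
        norm_add_le _ _
    _ ≤ Real.pi ^ (2 * m) * S + 2 ^ m * NW * (2 * Kw) * S := by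
        have h1 : ‖((A : ℝ) : ℂ)‖ = |A| := Complex.norm_real A
        rw [h1, _root_.abs_of_nonneg hA0]
        exact add_le_add hAb hBb
    _ = (Real.pi ^ (2 * m) + 2 ^ m * NW * (2 * Kw)) * S := by ring

lemma dense_domt (m : ℕ) : Dense (domt m) := by
  haveI : Fact ((1:ENNReal) ≤ 2) := ⟨one_le_two⟩
  intro f
  have h := lp.hasSum_single (p := (2:ENNReal)) (by norm_num) f
  refine mem_closure_of_tendsto h (Filter.Eventually.of_forall ?_)
  intro s
  show (∑ i ∈ s, lp.single 2 i (f i)) ∈ domt m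
  refine summable_of_ne_finset_zero (s := s) ?_
  intro k hk
  have hco : (∑ i ∈ s, lp.single (2:ENNReal) i (f i) : E) k = 0 := by
    rw [lp.coeFn_sum, Finset.sum_apply]
    apply Finset.sum_eq_zero
    intro i hi
    have hki : k ≠ i := fun h => hk (h ▸ hi)
    exact lp.single_apply_ne (E := fun _ : ℤ => ℂ) 2 i (f i) hki
  rw [hco]
  simp

/-- Sectoriality. -/
lemma sectorial (m : ℕ) (hm : 1 ≤ m) (V : ℤ → ℂ)
    (hV : Summable fun k : ℤ => wtp (-(m : ℝ)) k * ‖V k‖ ^ 2) :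
    ∃ γ : ℝ, ∃ M ≥ (0 : ℝ), ∀ u ∈ domt m,
      γ * ‖u‖ ^ 2 ≤ (tform m V u u).re ∧
      |(tform m V u u).im| ≤ M * ((tform m V u u).re - γ * ‖u‖ ^ 2) := by
  obtain ⟨K, hK0, hKest⟩ := master m hm V hV
  refine ⟨-(K + 1), max (1/3) K, le_trans (by norm_num) (le_max_left _ _), ?_⟩
  intro u hu
  have hu' := (dom_iff m u).1 hu
  set A := ∑' k, cplus m k * ‖u k‖ ^ 2 with hAdef
  have hA0 : 0 ≤ A := tsum_nonneg fun k => mul_nonneg (cplus_nonneg m k) (sq_nonneg _)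
  set B := ∑' k : ℤ, conv V (fun j => u j) k * (starRingEnd ℂ) (u k) with hBdef
  have hBest : ‖B‖ ≤ (1/4) * A + K * ‖u‖ ^ 2 := hKest u hu'
  have hre : (tform m V u u).re = A + B.re := by
    rw [tform_eq m V u, Complex.add_re, Complex.ofReal_re]
  have him : (tform m V u u).im = B.im := by
    rw [tform_eq m V u, Complex.add_im, Complex.ofReal_im, zero_add]
  have hreB : |B.re| ≤ ‖B‖ := Complex.abs_re_le_norm B
  have himB : |B.im| ≤ ‖B‖ := Complex.abs_im_le_norm B
  have hsq : (0:ℝ) ≤ ‖u‖ ^ 2 := sq_nonneg _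
  have hlow : (3/4) * A + ‖u‖ ^ 2 ≤ (tform m V u u).re - (-(K + 1)) * ‖u‖ ^ 2 := by
    rw [hre]
    have h1 : -‖B‖ ≤ B.re := neg_le_of_abs_le hreB
    nlinarith
  have hM13 : (1/3 : ℝ) ≤ max (1/3) K := le_max_left _ _
  have hMK : K ≤ max (1/3) K := le_max_right _ _
  have hM0 : (0:ℝ) ≤ max (1/3) K := le_trans (by norm_num) hM13
  constructor
  · nlinarith
  · rw [him]
    have h2 : |B.im| ≤ (1/4) * A + K * ‖u‖ ^ 2 := le_trans himB hBest
    have h3 : max (1/3) K * ((3/4) * A + ‖u‖ ^ 2) ≤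
        max (1/3) K * ((tform m V u u).re - (-(K + 1)) * ‖u‖ ^ 2) :=
      mul_le_mul_of_nonneg_left hlow hM0
    nlinarith

/-- Coercivity: the weighted sum is controlled by the form plus the norm. -/
lemma coercive (m : ℕ) (hm : 1 ≤ m) (V : ℤ → ℂ)
    (hV : Summable fun k : ℤ => wtp (-(m : ℝ)) k * ‖V k‖ ^ 2) :
    ∃ C1 : ℝ, 0 < C1 ∧ ∀ u : E, (Summable fun k => ww m k * ‖u k‖ ^ 2) →
      (∑' k, ww m k * ‖u k‖ ^ 2) ≤ C1 * (‖tform m V u u‖ + ‖u‖ ^ 2) := by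
  obtain ⟨K, hK0, hKest⟩ := master m hm V hV
  refine ⟨4 ^ m * (2 + (4/3) * (K + 2)), by positivity, ?_⟩
  intro u hu
  set S := ∑' k, ww m k * ‖u k‖ ^ 2 with hSdef
  have hS0 : 0 ≤ S := tsum_nonneg fun k => mul_nonneg (ww_nonneg m k) (sq_nonneg _)
  set A := ∑' k, cplus m k * ‖u k‖ ^ 2 with hAdef
  have hA0 : 0 ≤ A := tsum_nonneg fun k => mul_nonneg (cplus_nonneg m k) (sq_nonneg _)
  set B := ∑' k : ℤ, conv V (fun j => u j) k * (starRingEnd ℂ) (u k) with hBdef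
  have hBest : ‖B‖ ≤ (1/4) * A + K * ‖u‖ ^ 2 := hKest u hu
  have hre : (tform m V u u).re = A + B.re := by
    rw [tform_eq m V u, Complex.add_re, Complex.ofReal_re]
  have hreB : |B.re| ≤ ‖B‖ := Complex.abs_re_le_norm B
  have hrettt : (tform m V u u).re ≤ ‖tform m V u u‖ := Complex.re_le_norm _
  have hsq : (0:ℝ) ≤ ‖u‖ ^ 2 := sq_nonneg _
  have hAb : A ≤ (4/3) * (‖tform m V u u‖ + (K + 2) * ‖u‖ ^ 2) := by
    have h1 : -‖B‖ ≤ B.re := neg_le_of_abs_le hreB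
    have h2 : 0 ≤ ‖tform m V u u‖ := norm_nonneg _
    nlinarith
  have hSA : S ≤ 4 ^ m * (‖u‖ ^ 2 + A) := by
    have hpt : ∀ k : ℤ, ww m k * ‖u k‖ ^ 2 ≤ 4 ^ m * (‖u k‖ ^ 2 + cplus m k * ‖u k‖ ^ 2) := by
      intro k
      have := w_le m k
      have h2 : ww m k * ‖u k‖ ^ 2 ≤ (4 ^ m * (1 + cplus m k)) * ‖u k‖ ^ 2 :=
        mul_le_mul_of_nonneg_right this (sq_nonneg _)
      calc ww m k * ‖u k‖ ^ 2 ≤ (4 ^ m * (1 + cplus m k)) * ‖u k‖ ^ 2 := h2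
        _ = 4 ^ m * (‖u k‖ ^ 2 + cplus m k * ‖u k‖ ^ 2) := by ring
    have hsummR : Summable fun k => 4 ^ m * (‖u k‖ ^ 2 + cplus m k * ‖u k‖ ^ 2) :=
      (((lp_sq_summable u).add (A_summable m (fun k => u k) hu))).mul_left _
    calc S ≤ ∑' k, 4 ^ m * (‖u k‖ ^ 2 + cplus m k * ‖u k‖ ^ 2) :=
          Summable.tsum_le_tsum hpt hu hsummR
      _ = 4 ^ m * ((∑' k, ‖u k‖ ^ 2) + A) := by
          rw [tsum_mul_left, Summable.tsum_add (lp_sq_summable u) (A_summable m (fun k => u k) hu)]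
      _ = 4 ^ m * (‖u‖ ^ 2 + A) := by rw [← lp_norm_sq]
  have h4m : (0:ℝ) < 4 ^ m := by positivity
  have h2 : 0 ≤ ‖tform m V u u‖ := norm_nonneg _
  have h5 := mul_le_mul_of_nonneg_left hAb h4m.le
  nlinarith [mul_nonneg (mul_nonneg h4m.le hK0) hsq, mul_nonneg h4m.le h2,
    mul_nonneg h4m.le hsq, mul_nonneg h4m.le hA0]

lemma dom_sub_E (m : ℕ) (g h : E) (hg : Summable fun k => ww m k * ‖g k‖ ^ 2)
    (hh : Summable fun k => ww m k * ‖h k‖ ^ 2) :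
    Summable fun k => ww m k * ‖(g - h : E) k‖ ^ 2 := by
  have hneg : Summable fun k => ww m k * ‖(-(h k) : ℂ)‖ ^ 2 :=
    hh.congr fun k => by rw [norm_neg]
  refine (dom_add_raw m hg hneg).congr fun k => ?_
  rw [lp_coe_sub g h k, sub_eq_add_neg]

lemma closed_part (m : ℕ) (hm : 1 ≤ m) (V : ℤ → ℂ)
    (hV : Summable fun k : ℤ => wtp (-(m : ℝ)) k * ‖V k‖ ^ 2) :
    ∀ u : ℕ → E, (∀ n, u n ∈ domt m) → ∀ f : E,
      Tendsto u atTop (nhds f) →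
      (∀ ε > (0 : ℝ), ∃ N, ∀ p ≥ N, ∀ q ≥ N,
        ‖tform m V (u p - u q) (u p - u q)‖ < ε) →
      f ∈ domt m ∧
        Tendsto (fun n => tform m V (u n - f) (u n - f)) atTop (nhds 0) := by
  intro u hdomu f hTend hC
  obtain ⟨C1, hC10, hC1⟩ := coercive m hm V hV
  obtain ⟨C2, hC20, hC2⟩ := tform_upper m hm V hV
  have hdom : ∀ n, Summable fun k => ww m k * ‖u n k‖ ^ 2 := fun n => (dom_iff _ _).1 (hdomu n)
  have hdiffdom : ∀ p q : ℕ, Summable fun k => ww m k * ‖(u p - u q : E) k‖ ^ 2 :=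
    fun p q => dom_sub_E m (u p) (u q) (hdom p) (hdom q)
  -- Step 1 : the sequence is Cauchy in the weighted norm
  have step1 : ∀ ε > (0:ℝ), ∃ N, ∀ p ≥ N, ∀ q ≥ N,
      (∑' k, ww m k * ‖(u p - u q : E) k‖ ^ 2) ≤ ε := by
    intro ε hε
    obtain ⟨N₁, hN₁⟩ := hC (ε / (2 * C1)) (by positivity)
    have hCS : CauchySeq u := hTend.cauchySeq
    obtain ⟨N₂, hN₂⟩ := Metric.cauchySeq_iff.1 hCS (Real.sqrt (ε / (2 * C1))) (by positivity)
    refine ⟨max N₁ N₂, fun p hp q hq => ?_⟩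
    have h1 := hN₁ p (le_trans (le_max_left _ _) hp) q (le_trans (le_max_left _ _) hq)
    have h2 := hN₂ p (le_trans (le_max_right _ _) hp) q (le_trans (le_max_right _ _) hq)
    rw [dist_eq_norm] at h2
    have h3 : ‖u p - u q‖ ^ 2 < ε / (2 * C1) := by
      have := pow_lt_pow_left₀ h2 (norm_nonneg _) (by norm_num : 2 ≠ 0)
      rwa [Real.sq_sqrt (by positivity : (0:ℝ) ≤ ε / (2 * C1))] at this
    have h4 := hC1 (u p - u q) (hdiffdom p q)
    calc (∑' k, ww m k * ‖(u p - u q : E) k‖ ^ 2)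
        ≤ C1 * (‖tform m V (u p - u q) (u p - u q)‖ + ‖u p - u q‖ ^ 2) := h4
      _ ≤ C1 * (ε / (2 * C1) + ε / (2 * C1)) := by
          apply mul_le_mul_of_nonneg_left _ hC10.le
          linarith
      _ = ε := by field_simp; ring
  -- Step 2 : pointwise convergence of coordinates
  have step2 : ∀ k : ℤ, Tendsto (fun n => u n k) atTop (nhds (f k)) := by
    intro k
    rw [tendsto_iff_dist_tendsto_zero]
    have hb : ∀ n, dist (u n k) (f k) ≤ dist (u n) f := by
      intro n
      rw [dist_eq_norm, dist_eq_norm]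
      calc ‖u n k - f k‖ = ‖(u n - f : E) k‖ := by rw [lp_coe_sub]
        _ ≤ ‖u n - f‖ := lp_apply_le _ _
    have hd : Tendsto (fun n => dist (u n) f) atTop (nhds 0) :=
      tendsto_iff_dist_tendsto_zero.1 hTend
    exact squeeze_zero (fun n => dist_nonneg) hb hd
  -- Step 3 : weighted convergence to f
  have step3 : ∀ ε > (0:ℝ), ∃ N, ∀ n ≥ N,
      (Summable fun k => ww m k * ‖u n k - f k‖ ^ 2) ∧
        (∑' k, ww m k * ‖u n k - f k‖ ^ 2) ≤ ε := by
    intro ε hε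
    obtain ⟨N, hN⟩ := step1 (ε / 2) (by positivity)
    refine ⟨N, fun n hn => ?_⟩
    have hbound : ∀ s : Finset ℤ, (∑ k ∈ s, ww m k * ‖u n k - f k‖ ^ 2) ≤ ε / 2 := by
      intro s
      have htendq : Tendsto (fun q => ∑ k ∈ s, ww m k * ‖u n k - u q k‖ ^ 2) atTop
          (nhds (∑ k ∈ s, ww m k * ‖u n k - f k‖ ^ 2)) := by
        apply tendsto_finset_sum
        intro k _
        have h1 : Tendsto (fun q => u q k) atTop (nhds (f k)) := step2 k
        have h2 : Tendsto (fun q => u n k - u q k) atTop (nhds (u n k - f k)) :=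
          tendsto_const_nhds.sub h1
        exact ((h2.norm.pow 2).const_mul _)
      apply le_of_tendsto htendq
      rw [eventually_atTop]
      refine ⟨N, fun q hq => ?_⟩
      have h5 : (∑ k ∈ s, ww m k * ‖u n k - u q k‖ ^ 2) ≤
          ∑' k, ww m k * ‖(u n - u q : E) k‖ ^ 2 := by
        have he : ∀ k ∈ s, ww m k * ‖u n k - u q k‖ ^ 2 =
            ww m k * ‖(u n - u q : E) k‖ ^ 2 := fun k _ => by rw [lp_coe_sub]
        rw [Finset.sum_congr rfl he]
        exact Summable.sum_le_tsum s (fun k _ => mul_nonneg (ww_nonneg m k) (sq_nonneg _))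
          (hdiffdom n q)
      exact le_trans h5 (hN n hn q hq)
    have hnn : ∀ k : ℤ, 0 ≤ ww m k * ‖u n k - f k‖ ^ 2 :=
      fun k => mul_nonneg (ww_nonneg m k) (sq_nonneg _)
    have hsumm : Summable fun k => ww m k * ‖u n k - f k‖ ^ 2 :=
      summable_of_sum_le hnn hbound
    exact ⟨hsumm, le_trans (Summable.tsum_le_of_sum_le hsumm hbound) (by linarith)⟩
  -- f is in the domain
  obtain ⟨N₀, hN₀⟩ := step3 1 one_pos
  have hfdiff : Summable fun k => ww m k * ‖u N₀ k - f k‖ ^ 2 := (hN₀ N₀ le_rfl).1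
  have hfdom : Summable fun k => ww m k * ‖f k‖ ^ 2 := by
    have hneg : Summable fun k => ww m k * ‖(-(u N₀ k - f k) : ℂ)‖ ^ 2 :=
      hfdiff.congr fun k => by rw [norm_neg]
    refine (dom_add_raw m (hdom N₀) hneg).congr fun k => ?_
    congr 2
    ring
  refine ⟨(dom_iff m f).2 hfdom, ?_⟩
  -- convergence of the form values
  have hudiff : ∀ n, Summable fun k => ww m k * ‖(u n - f : E) k‖ ^ 2 :=
    fun n => dom_sub_E m (u n) f (hdom n) hfdom
  have hSn : Tendsto (fun n => ∑' k, ww m k * ‖(u n - f : E) k‖ ^ 2) atTop (nhds 0) := by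
    rw [Metric.tendsto_atTop]
    intro ε hε
    obtain ⟨N, hN⟩ := step3 (ε / 2) (by positivity)
    refine ⟨N, fun n hn => ?_⟩
    have h1 := (hN n hn).2
    have h2 : (∑' k, ww m k * ‖(u n - f : E) k‖ ^ 2) = ∑' k, ww m k * ‖u n k - f k‖ ^ 2 :=
      tsum_congr fun k => by rw [lp_coe_sub]
    rw [Real.dist_eq, sub_zero]
    rw [_root_.abs_of_nonneg (tsum_nonneg fun k => mul_nonneg (ww_nonneg m k) (sq_nonneg _))]
    rw [h2]
    linarith
  have hbnd : ∀ n, ‖tform m V (u n - f) (u n - f)‖ ≤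
      C2 * (∑' k, ww m k * ‖(u n - f : E) k‖ ^ 2) :=
    fun n => hC2 (u n - f) (hudiff n)
  have hC2S : Tendsto (fun n => C2 * (∑' k, ww m k * ‖(u n - f : E) k‖ ^ 2)) atTop (nhds 0) := by
    have := hSn.const_mul C2
    rwa [mul_zero] at this
  exact squeeze_zero_norm hbnd hC2S

theorem form_densely_defined_closed_sectorial (m : ℕ) (hm : 1 ≤ m) (V : ℤ → ℂ)
    (hV : Summable fun k : ℤ => wtp (-(m : ℝ)) k * ‖V k‖ ^ 2) :
    -- densely defined
    Dense (domt m) ∧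
    -- sectorial: the numerical range lies in a sector with vertex γ and
    -- half-angle θ < π/2 (M = tan θ)
    (∃ γ : ℝ, ∃ M ≥ (0 : ℝ), ∀ u ∈ domt m,
      γ * ‖u‖ ^ 2 ≤ (tform m V u u).re ∧
      |(tform m V u u).im| ≤ M * ((tform m V u u).re - γ * ‖u‖ ^ 2)) ∧
    -- closed: if uₙ ∈ dom t, uₙ → f in L² and t[uₙ−u_q] → 0, then f ∈ dom t
    -- and t[uₙ−f] → 0
    (∀ u : ℕ → E, (∀ n, u n ∈ domt m) → ∀ f : E,
      Tendsto u atTop (nhds f) →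
      (∀ ε > (0 : ℝ), ∃ N, ∀ p ≥ N, ∀ q ≥ N,
        ‖tform m V (u p - u q) (u p - u q)‖ < ε) →
      f ∈ domt m ∧
        Tendsto (fun n => tform m V (u n - f) (u n - f)) atTop (nhds 0)) :=
  ⟨dense_domt m, sectorial m hm V hV, closed_part m hm V hV⟩
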